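/- For any dimension k ≥ 1 and any prime power q, the minimum length n of a rank-k matrix G ∈ F_q^{k×n} satisfying the 2-all-symbol batch property equals k+1. In particular, the k×(k+1) matrix consisting of the identity matrix together with an all-ones parity column satisfies the 2-all-symbol batch property, and no rank-k matrix with n = k columns satisfies it. -/

import Mathlib

open Matrix


/-- `G` serves the list of vectors `v` (indexed by `ι`) if there are pairwise disjoint
recovery sets `R i` of column indices with `v i` in the span of the columns indexed by `R i`. -/
def Serves (F : Type*) [Field F] {m n ι : Type*} (G : Matrix m n F) (v : ι → (m → F)) : Prop :=
  ∃ R : ι → Set n, (Pairwise fun a b => Disjoint (R a) (R b)) ∧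
    ∀ i, v i ∈ Submodule.span F ((fun j a => G a j) '' R i)

/-- the `t`-all-symbol PIR property. -/
def ASPIR (F : Type*) [Field F] {m n : Type*} (t : ℕ) (G : Matrix m n F) : Prop :=
  ∀ j : n, Serves F G fun _ : Fin t => fun a => G a j

/-- the `t`-all-symbol batch property. -/
def ASBatch (F : Type*) [Field F] {m n : Type*} (t : ℕ) (G : Matrix m n F) : Prop :=
  ∀ c : Fin t → n, Serves F G fun i => fun a => G a (c i)


section Aux

variable {F : Type*} [Field F] {k : ℕ}

/-- The identity-plus-parity matrix. -/
private def Mpar (F : Type*) [Field F] (k : ℕ) : Matrix (Fin k) (Fin (k + 1)) F :=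
  Matrix.of fun (i : Fin k) (j : Fin (k + 1)) =>
    if (j : ℕ) < k then (if (i : ℕ) = (j : ℕ) then (1 : F) else 0) else 1

private lemma Mpar_col_castSucc (i : Fin k) :
    (fun a => Mpar F k a i.castSucc) = fun a : Fin k => if a = i then (1 : F) else 0 := by
  funext a
  simp [Mpar, Fin.ext_iff, i.is_lt]

private lemma Mpar_col_last :
    (fun a => Mpar F k a (Fin.last k)) = fun _ : Fin k => (1 : F) := by
  funext a
  simp [Mpar]

private lemma Mpar_sum :
    (fun a => Mpar F k a (Fin.last k)) = ∑ i : Fin k, (fun a => Mpar F k a i.castSucc) := by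
  funext a
  simp only [Finset.sum_apply]
  have h1 := congrFun (Mpar_col_last (F := F) (k := k)) a
  have h2 := fun i : Fin k => congrFun (Mpar_col_castSucc (F := F) i) a
  simp [h1, h2, Finset.sum_ite_eq]

/-- Any column of `Mpar` is in the span of the others. -/
private lemma Mpar_col_mem (j : Fin (k + 1)) :
    (fun a => Mpar F k a j) ∈
      Submodule.span F ((fun j a => Mpar F k a j) '' {j}ᶜ) := by
  have hmem : ∀ i : Fin (k + 1), i ≠ j →
      (fun a => Mpar F k a i) ∈ Submodule.span F ((fun j a => Mpar F k a j) '' {j}ᶜ) := by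
    intro i hi
    exact Submodule.subset_span ⟨i, hi, rfl⟩
  induction j using Fin.lastCases with
  | last =>
    rw [Mpar_sum]
    refine Submodule.sum_mem _ fun i _ => hmem _ ?_
    exact (Fin.castSucc_lt_last i).ne
  | cast i =>
    have hsum : (fun a => Mpar F k a (Fin.last k)) =
        (∑ i' ∈ Finset.univ.erase i, (fun a => Mpar F k a i'.castSucc)) +
          (fun a => Mpar F k a i.castSucc) := by
      rw [Mpar_sum, Finset.sum_erase_add _ _ (Finset.mem_univ i)]
    have : (fun a => Mpar F k a i.castSucc) =
        (fun a => Mpar F k a (Fin.last k)) -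
          ∑ i' ∈ Finset.univ.erase i, (fun a => Mpar F k a i'.castSucc) := by
      rw [hsum]; abel
    rw [this]
    refine Submodule.sub_mem _ (hmem _ (Fin.castSucc_lt_last i).ne') ?_
    refine Submodule.sum_mem _ fun i' hi' => hmem _ ?_
    simp only [Finset.mem_erase] at hi'
    simpa [Fin.castSucc_inj] using hi'.1

private lemma Mpar_batch : ASBatch F 2 (Mpar F k) := by
  intro c
  by_cases hc : c 0 = c 1
  · refine ⟨![{c 0}, {c 0}ᶜ], ?_, ?_⟩
    · intro a b hab
      fin_cases a <;> fin_cases b <;>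
        simp_all [disjoint_compl_right, disjoint_compl_left]
    · intro i
      fin_cases i
      · exact Submodule.subset_span ⟨c 0, rfl, rfl⟩
      · simpa [← hc] using Mpar_col_mem (F := F) (c 0)
  · refine ⟨![{c 0}, {c 1}], ?_, ?_⟩
    · intro a b hab
      fin_cases a <;> fin_cases b <;>
        simp_all [Set.disjoint_singleton, Ne.symm hc]
    · intro i
      fin_cases i <;> exact Submodule.subset_span ⟨_, rfl, rfl⟩

private lemma Mpar_rank : (Mpar F k).rank = k := by
  have hsurj : Function.Surjective (Mpar F k).mulVecLin := by
    intro x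
    refine ⟨fun j => if h : (j : ℕ) < k then x ⟨j, h⟩ else 0, ?_⟩
    funext a
    simp only [mulVecLin_apply, mulVec, dotProduct]
    rw [Fin.sum_univ_castSucc]
    simp only [Mpar, Fin.coe_castSucc, Fin.is_lt, dite_true, if_true, Fin.val_last,
      lt_irrefl, if_false, Matrix.of_apply, Fin.is_lt, dif_pos, mul_zero, one_mul, add_zero,
      lt_self_iff_false, dif_neg, not_false_iff, ite_mul, zero_mul, mul_ite]
    simp [Fin.val_inj, Finset.sum_ite_eq, Fin.eta]
  rw [Matrix.rank, LinearMap.range_eq_top.2 hsurj]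
  simp

/-- No matrix with linearly independent columns can satisfy the 2-batch property
(when there is at least one column). -/
private lemma no_indep {n : Type*} [Nonempty n] {G : Matrix (Fin k) n F}
    (hind : LinearIndependent F fun j a => G a j) : ¬ ASBatch F 2 G := by
  intro h
  obtain ⟨j⟩ := ‹Nonempty n›
  obtain ⟨R, hdis, hmem⟩ := h fun _ => j
  have h0 : j ∈ R 0 := by
    by_contra hj
    exact hind.notMem_span_image hj (hmem 0)
  have h1 : j ∈ R 1 := by
    by_contra hj
    exact hind.notMem_span_image hj (hmem 1)
  exact (hdis (by decide : (0 : Fin 2) ≠ 1)).ne_of_mem h0 h1 rfl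

private lemma no_square (G : Matrix (Fin k) (Fin k) F) (hk : 1 ≤ k) (hr : G.rank = k) :
    ¬ ASBatch F 2 G := by
  have : Nonempty (Fin k) := ⟨⟨0, hk⟩⟩
  have hind : LinearIndependent F fun j a => G a j := by
    rw [show (fun (j : Fin k) (a : Fin k) => G a j) = G.col from rfl,
      linearIndependent_iff_card_eq_finrank_span]
    rw [Matrix.rank_eq_finrank_span_cols] at hr
    simpa [Set.finrank] using hr.symm
  exact no_indep hind

end Aux

theorem stmt5 {F : Type*} [Field F] [Fintype F] {k : ℕ} (hk : 1 ≤ k) :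
    IsLeast {n : ℕ | ∃ G : Matrix (Fin k) (Fin n) F, G.rank = k ∧ ASBatch F 2 G} (k + 1) ∧
    ASBatch F 2 (Matrix.of fun (i : Fin k) (j : Fin (k + 1)) =>
      if (j : ℕ) < k then (if (i : ℕ) = (j : ℕ) then (1 : F) else 0) else 1) ∧
    (∀ G : Matrix (Fin k) (Fin k) F, G.rank = k → ¬ ASBatch F 2 G) := by
  refine ⟨⟨⟨Mpar F k, Mpar_rank, Mpar_batch⟩, ?_⟩, Mpar_batch, fun G hr => no_square G hk hr⟩
  rintro n ⟨G, hr, hb⟩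
  have hk_le : k ≤ n := by
    have := G.rank_le_card_width
    rw [hr, Fintype.card_fin] at this
    exact this
  by_contra hlt
  push_neg at hlt
  have hn : n = k := by omega
  subst hn
  exact no_square G hk hr hb
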